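/- Let G, G_1, …, G_m be pairwise disjoint subsets of [n] with G ∪ G_1 ∪ ⋯ ∪ G_m = [n], and let g : 2^{[n]} → ℝ be a submodular set function with g(∅) = 0 such that for every H ⊆ G and every 𝒯 ⊆ [m], g((⋃_{ℓ ∈ 𝒯} G_ℓ) ∪ H) = ∑_{i ∈ H} g({i}) + ∑_{ℓ ∈ 𝒯} g(G_ℓ). Then for all S ⊆ G and all S_1 ⊆ G_1, …, S_m ⊆ G_m, one has g((⋃_{ℓ=1}^m S_ℓ) ∪ S) = ∑_{i ∈ S} g({i}) + ∑_{ℓ=1}^m g(S_ℓ). -/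
import Mathlib


open Finset
open scoped Classical BigOperators

theorem stmt_7 (n m : ℕ) (g : Finset (Fin n) → ℝ)
    (hg0 : g ∅ = 0)
    (hsubmod : ∀ A B : Finset (Fin n), g (A ∪ B) + g (A ∩ B) ≤ g A + g B)
    (G : Finset (Fin n)) (Gs : Fin m → Finset (Fin n))
    (hdisjG : ∀ ℓ : Fin m, Disjoint G (Gs ℓ))
    (hdisj : ∀ ℓ ℓ' : Fin m, ℓ ≠ ℓ' → Disjoint (Gs ℓ) (Gs ℓ'))
    (hcover : G ∪ Finset.univ.biUnion Gs = Finset.univ)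
    (hmodular : ∀ H ⊆ G, ∀ 𝒯 : Finset (Fin m),
      g ((𝒯.biUnion Gs) ∪ H) = (∑ i ∈ H, g {i}) + ∑ ℓ ∈ 𝒯, g (Gs ℓ)) :
    ∀ Sset ⊆ G, ∀ Ss : Fin m → Finset (Fin n), (∀ ℓ, Ss ℓ ⊆ Gs ℓ) →
      g ((Finset.univ.biUnion Ss) ∪ Sset) = (∑ i ∈ Sset, g {i}) + ∑ ℓ : Fin m, g (Ss ℓ) := by
  intro Sset hS Ss hSs
  have hdisjS : ∀ ℓ, Disjoint Sset (Ss ℓ) := fun ℓ =>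
    ((hdisjG ℓ).mono hS (hSs ℓ))
  have hdisjSS : ∀ ℓ ℓ', ℓ ≠ ℓ' → Disjoint (Ss ℓ) (Ss ℓ') := fun ℓ ℓ' h =>
    ((hdisj ℓ ℓ' h).mono (hSs ℓ) (hSs ℓ'))
  have hgS : g Sset = ∑ i ∈ Sset, g {i} := by
    have := hmodular Sset hS ∅
    simpa using this
  have subadd : ∀ A B : Finset (Fin n), Disjoint A B → g (A ∪ B) ≤ g A + g B := by
    intro A B hAB
    have h := hsubmod A B
    rw [Finset.disjoint_iff_inter_eq_empty.mp hAB, hg0] at h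
    linarith
  -- upper bound
  have upper : ∀ 𝒯 : Finset (Fin m),
      g ((𝒯.biUnion Ss) ∪ Sset) ≤ (∑ i ∈ Sset, g {i}) + ∑ ℓ ∈ 𝒯, g (Ss ℓ) := by
    intro 𝒯
    induction 𝒯 using Finset.induction with
    | empty => simp [hgS]
    | @insert a 𝒯 ha ih =>
      have hrw : ((insert a 𝒯).biUnion Ss) ∪ Sset = Ss a ∪ ((𝒯.biUnion Ss) ∪ Sset) := by
        rw [Finset.biUnion_insert]
        ext x; simp [or_assoc]
      have hd : Disjoint (Ss a) ((𝒯.biUnion Ss) ∪ Sset) := by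
        rw [Finset.disjoint_union_right]
        refine ⟨?_, (hdisjS a).symm⟩
        rw [Finset.disjoint_biUnion_right]
        intro ℓ hℓ
        exact hdisjSS a ℓ (fun h => ha (h ▸ hℓ))
      have := subadd (Ss a) ((𝒯.biUnion Ss) ∪ Sset) hd
      rw [hrw, Finset.sum_insert ha]
      linarith
  -- lower bound
  have lower : ∀ 𝒯 : Finset (Fin m),
      (∑ i ∈ Sset, g {i}) + ((∑ ℓ ∈ 𝒯, g (Ss ℓ)) + ∑ ℓ ∈ 𝒯ᶜ, g (Gs ℓ)) ≤
        g ((𝒯.biUnion Ss ∪ 𝒯ᶜ.biUnion Gs) ∪ Sset) := by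
    intro 𝒯
    induction 𝒯 using Finset.induction with
    | empty =>
      have := hmodular Sset hS Finset.univ
      simp only [Finset.biUnion_empty, Finset.compl_empty, Finset.sum_empty, zero_add,
        Finset.empty_union]
      rw [this]
    | @insert a 𝒯 ha ih =>
      set C := (insert a 𝒯)ᶜ with hC
      have haC : a ∉ C := by simp [hC]
      have hCcompl : 𝒯ᶜ = insert a C := by
        rw [hC]; ext x
        simp only [Finset.mem_compl, Finset.mem_insert]
        by_cases hx : x = a
        · subst hx; simp [ha]
        · simp [hx]
      have hsubT : Ss a ⊆ Gs a := hSs a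
      have hAB : ((insert a 𝒯).biUnion Ss ∪ C.biUnion Gs) ∪ Sset ∪ Gs a
          = (𝒯.biUnion Ss ∪ 𝒯ᶜ.biUnion Gs) ∪ Sset := by
        rw [hCcompl, Finset.biUnion_insert, Finset.biUnion_insert]
        ext x
        simp only [Finset.mem_union]
        have h1 : x ∈ Ss a → x ∈ Gs a := fun h => hsubT h
        tauto
      have hd1 : Disjoint (𝒯.biUnion Ss) (Gs a) := by
        rw [Finset.disjoint_biUnion_left]
        intro ℓ hℓ
        exact (hdisj ℓ a (fun h => ha (h ▸ hℓ))).mono_left (hSs ℓ)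
      have hd2 : Disjoint (C.biUnion Gs) (Gs a) := by
        rw [Finset.disjoint_biUnion_left]
        intro ℓ hℓ
        exact hdisj ℓ a (fun h => haC (h ▸ hℓ))
      have hd3 : Disjoint Sset (Gs a) := (hdisjG a).mono_left hS
      have hint : (((insert a 𝒯).biUnion Ss ∪ C.biUnion Gs) ∪ Sset) ∩ Gs a = Ss a := by
        rw [Finset.biUnion_insert]
        ext x
        simp only [Finset.mem_inter, Finset.mem_union]
        constructor
        · rintro ⟨((h | h) | h) | h, hx⟩
          · exact h
          · exact absurd hx (Finset.disjoint_left.mp hd1 h)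
          · exact absurd hx (Finset.disjoint_left.mp hd2 h)
          · exact absurd hx (Finset.disjoint_left.mp hd3 h)
        · intro h
          exact ⟨Or.inl (Or.inl (Or.inl h)), hsubT h⟩
      have hsub := hsubmod (((insert a 𝒯).biUnion Ss ∪ C.biUnion Gs) ∪ Sset) (Gs a)
      rw [hAB, hint] at hsub
      have hsum1 : ∑ ℓ ∈ insert a 𝒯, g (Ss ℓ) = g (Ss a) + ∑ ℓ ∈ 𝒯, g (Ss ℓ) :=
        Finset.sum_insert ha
      have hsum2 : ∑ ℓ ∈ 𝒯ᶜ, g (Gs ℓ) = g (Gs a) + ∑ ℓ ∈ C, g (Gs ℓ) := by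
        rw [hCcompl, Finset.sum_insert haC]
      rw [hsum1]
      rw [hsum2] at ih
      linarith
  have hlow := lower Finset.univ
  have hup := upper Finset.univ
  simp only [Finset.compl_univ, Finset.biUnion_empty, Finset.sum_empty, Finset.union_empty,
    add_zero] at hlow
  linarith
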